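/- arXiv:1604.00654 — 2 statements merged into one kernel-verified Lean document; each statement's English description precedes it below -/
import Mathlib

section
/- Let G be a graph whose vertices can be labeled w_1,...,w_h, z_1,...,z_h such that: (i) {w_1,...,w_h} is a vertex cover; (ii) {w_i,z_i} ∈ E(G) for all i; (iii) if {y_i,w_j} and {z_j,w_l} ∈ E(G) with i,j,l distinct and y_i ∈ {w_i,z_i}, then {y_i,w_l} ∈ E(G); (iv) if {w_i,z_j} ∈ E(G) then {w_i,w_j} ∉ E(G). Then for the graph G_k (k ≥ 1), the following analogue of condition (iii) holds: for distinct indices i,j,l of the relabeled cover vertices a_1,...,a_{kh} and independent vertices b_1,...,b_{kh} of G_k, if {a_i,a_j} and {b_j,a_l} are edges of G_k, then {a_i,a_l} is an edge of G_k. -/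
/-- The graph `G_k`. -/
def graphPower {V : Type*} (G : SimpleGraph V) (k : ℕ) : SimpleGraph (V × Fin k) where
  Adj a b := G.Adj a.1 b.1 ∧ a.2.val + b.2.val + 2 ≤ k + 1
  symm := ⟨by rintro a b ⟨h1, h2⟩; exact ⟨h1.symm, by omega⟩⟩
  loopless := ⟨by rintro a ⟨h1, _⟩; exact G.loopless.irrefl a.1 h1⟩

/-- Vertices of `G` are `w_1,…,w_h` (encoded `Sum.inl`) and `z_1,…,z_h` (encoded
`Sum.inr`).  Assuming conditions (i)–(iv), the analogue of (iii) holds in `G_k`: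
for pairwise distinct labels, if `{a_i, a_j}` and `{b_j, a_l}` are edges of `G_k`,
then so is `{a_i, a_l}`, where `a` corresponds to a copy `w_{m,p}` of a cover
vertex and `b_j = z_{q, k+1-r}` (0-indexed: copy `k-1-r` of `z_q`). -/
theorem stmt3 (h k : ℕ) (G : SimpleGraph (Fin h ⊕ Fin h))
    -- (i) `{w_1,…,w_h}` is a vertex cover
    (hcov : ∀ u v, G.Adj u v → (∃ i, u = Sum.inl i) ∨ (∃ i, v = Sum.inl i))
    -- (ii) `{w_i, z_i} ∈ E(G)`
    (hperf : ∀ i : Fin h, G.Adj (Sum.inl i) (Sum.inr i))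
    -- (iii)
    (hiii : ∀ i j l : Fin h, i ≠ j → j ≠ l → i ≠ l →
      ∀ y : Fin h ⊕ Fin h, (y = Sum.inl i ∨ y = Sum.inr i) →
      G.Adj y (Sum.inl j) → G.Adj (Sum.inr j) (Sum.inl l) → G.Adj y (Sum.inl l))
    -- (iv)
    (hiv : ∀ i j : Fin h, G.Adj (Sum.inl i) (Sum.inr j) → ¬ G.Adj (Sum.inl i) (Sum.inl j))
    (m q s : Fin h) (p r t : Fin k)
    (hd1 : (m, p) ≠ (q, r)) (hd2 : (q, r) ≠ (s, t)) (hd3 : (m, p) ≠ (s, t))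
    (e1 : (graphPower G k).Adj (Sum.inl m, p) (Sum.inl q, r))
    (e2 : (graphPower G k).Adj
      (Sum.inr q, ⟨k - 1 - r.val, by have := r.2; omega⟩) (Sum.inl s, t)) :
    (graphPower G k).Adj (Sum.inl m, p) (Sum.inl s, t) := by
  obtain ⟨e1a, e1b⟩ := e1
  obtain ⟨e2a, e2b⟩ := e2
  simp only at e1a e2a e1b e2b
  have hr := r.2
  have hpt : p.val + t.val + 2 ≤ k + 1 := by omega
  have hmq : m ≠ q := by rintro rfl; exact G.loopless.irrefl _ e1a
  refine ⟨?_, hpt⟩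
  by_cases hms : m = s
  · subst hms
    exact absurd e1a (hiv m q e2a.symm)
  · by_cases hqs : q = s
    · subst hqs; exact e1a
    · exact hiii m q s hmq hqs hms (Sum.inl m) (Or.inl rfl) e1a e2a
end

section
/- Let G be a bipartite graph with bipartition X = {x_1,...,x_s}, Y = {y_1,...,y_t}, with no isolated vertices, and let k ≥ 2. In the graph G_k, the set F = {x_{i,j} : 1 ≤ i ≤ s, 2 ≤ j ≤ k} is an independent set, and its closed neighborhood is N_{G_k}[F] = F ∪ {y_{i,j} : 1 ≤ i ≤ t, 1 ≤ j ≤ k−1}. Consequently, the graph G_k \ N_{G_k}[F] is isomorphic to G. -/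
/-- `A` is an independent set of `G`. -/
def IsIndep {V : Type*} (G : SimpleGraph V) (A : Set V) : Prop :=
  ∀ u ∈ A, ∀ v ∈ A, ¬ G.Adj u v

/-- The set `F = {x_{i,j} : x_i ∈ X, 2 ≤ j ≤ k}` (0-indexed: `1 ≤ j`). -/
def Fset {V : Type*} (X : Set V) (k : ℕ) : Set (V × Fin k) :=
  {a | a.1 ∈ X ∧ 1 ≤ a.2.val}

/-- The closed neighborhood of a vertex set `F` in a graph `H`. -/
def closedNbhd {W : Type*} (H : SimpleGraph W) (F : Set W) : Set W :=
  {b | b ∈ F ∨ ∃ a ∈ F, H.Adj a b}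

/-- Let `G` be bipartite with parts `X`, `Y`, no isolated vertices, and `k ≥ 2`.
In `G_k`, the set `F = {x_{i,j} : x_i ∈ X, 2 ≤ j ≤ k}` is independent, its closed
neighborhood is `F ∪ {y_{i,j} : y_i ∈ Y, 1 ≤ j ≤ k-1}` (0-indexed: `j ≤ k-2`),
and `G_k` minus this closed neighborhood is isomorphic to `G`. -/
theorem stmt9 {V : Type*} (G : SimpleGraph V) (X Y : Set V)
    (hpart : ∀ v : V, v ∈ X ∨ v ∈ Y) (hdisj : Disjoint X Y)
    (hbip : ∀ u v : V, G.Adj u v → (u ∈ X ∧ v ∈ Y) ∨ (u ∈ Y ∧ v ∈ X))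
    (hiso : ∀ v : V, ∃ u, G.Adj v u)
    (k : ℕ) (hk : 2 ≤ k) :
    IsIndep (graphPower G k) (Fset X k) ∧
    closedNbhd (graphPower G k) (Fset X k)
      = Fset X k ∪ {b : V × Fin k | b.1 ∈ Y ∧ b.2.val ≤ k - 2} ∧
    Nonempty (((graphPower G k).induce
      (Fset X k ∪ {b : V × Fin k | b.1 ∈ Y ∧ b.2.val ≤ k - 2})ᶜ) ≃g G) := by

  classical
  have hk0 : 0 < k := by omega
  have hXY : ∀ v, v ∈ X → v ∉ Y := fun v hv => Set.disjoint_left.mp hdisj hv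
  refine ⟨?_, ?_, ?_⟩
  · rintro u ⟨hu, _⟩ v ⟨hv, _⟩ ⟨hadj, _⟩
    rcases hbip _ _ hadj with ⟨_, h⟩ | ⟨h, _⟩
    · exact hXY _ hv h
    · exact hXY _ hu h
  · ext b
    constructor
    · rintro (hb | ⟨a, ⟨haX, ha1⟩, hadj, hle⟩)
      · exact Or.inl hb
      · right
        rcases hbip _ _ hadj with ⟨_, hY⟩ | ⟨hY, _⟩
        · exact ⟨hY, by omega⟩
        · exact absurd haX (fun h' => hXY _ h' hY)
    · rintro (hb | ⟨hbY, hble⟩)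
      · exact Or.inl hb
      · obtain ⟨u, hu⟩ := hiso b.1
        have huX : u ∈ X := by
          rcases hbip _ _ hu with ⟨h, _⟩ | ⟨_, h⟩
          · exact absurd h (fun h' => hXY _ h' hbY)
          · exact h
        refine Or.inr ⟨(u, ⟨1, by omega⟩), ⟨huX, le_refl _⟩, hu.symm, ?_⟩
        simp only []
        omega
  · have hmemS : ∀ b : V × Fin k,
        b ∈ (Fset X k ∪ {b : V × Fin k | b.1 ∈ Y ∧ b.2.val ≤ k - 2})ᶜ ↔
        ((b.1 ∈ X ∧ b.2.val = 0) ∨ (b.1 ∈ Y ∧ b.2.val = k - 1)) := by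
      intro b
      simp only [Set.mem_compl_iff, Set.mem_union, Fset, Set.mem_setOf_eq, not_or, not_and]
      constructor
      · rintro ⟨h1, h2⟩
        rcases hpart b.1 with hX | hY
        · exact Or.inl ⟨hX, by have := h1 hX; omega⟩
        · exact Or.inr ⟨hY, by have := h2 hY; have := b.2.isLt; omega⟩
      · rintro (⟨hX, h0⟩ | ⟨hY, h1⟩)
        · exact ⟨fun _ => by omega, fun h' => absurd h' (hXY _ hX)⟩
        · exact ⟨fun h' => absurd hY (hXY _ h'), fun _ => by omega⟩
    refine ⟨⟨⟨fun a => a.val.1,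
      fun v => if h : v ∈ X then ⟨(v, ⟨0, hk0⟩), (hmemS _).mpr (Or.inl ⟨h, rfl⟩)⟩
        else ⟨(v, ⟨k - 1, by omega⟩), (hmemS _).mpr (Or.inr ⟨(hpart v).resolve_left h, rfl⟩)⟩,
      ?_, ?_⟩, ?_⟩⟩
    · rintro ⟨⟨v, j⟩, hS⟩
      rcases (hmemS _).mp hS with ⟨hX, h0⟩ | ⟨hY, h1⟩
      · simp only [dif_pos hX]
        exact Subtype.ext (Prod.ext rfl (Fin.ext h0.symm))
      · have hnX : v ∉ X := fun h' => hXY _ h' hY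
        simp only [dif_neg hnX]
        exact Subtype.ext (Prod.ext rfl (Fin.ext h1.symm))
    · intro v
      by_cases h : v ∈ X
      · simp [dif_pos h]
      · simp [dif_neg h]
    · rintro ⟨⟨u, i⟩, hu⟩ ⟨⟨v, j⟩, hv⟩
      show G.Adj u v ↔ (graphPower G k).Adj (u, i) (v, j)
      constructor
      · intro hadj
        refine ⟨hadj, ?_⟩
        rcases (hmemS _).mp hu with ⟨hX, h0⟩ | ⟨hY, h1⟩ <;>
          rcases (hmemS _).mp hv with ⟨hX', h0'⟩ | ⟨hY', h1'⟩
        · rcases hbip _ _ hadj with ⟨_, h⟩ | ⟨h, _⟩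
          · exact absurd hX' (fun h' => hXY _ h' h)
          · exact absurd hX (fun h' => hXY _ h' h)
        · omega
        · omega
        · rcases hbip _ _ hadj with ⟨h, _⟩ | ⟨_, h⟩
          · exact absurd h (fun h' => hXY _ h' hY)
          · exact absurd h (fun h' => hXY _ h' hY')
      · exact fun h => h.1
end
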